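/- Fix the linear order 1 < 2 < ⋯ < 2n on the ground set of the Catalan matroid C_n. For any basis B of C_n, the internal activity i(B) (the number of elements i ∈ B such that i is the smallest element of the unique cocircuit contained in ({1,…,2n} \ B) ∪ {i}) equals a(B), the number of up-steps that the Dyck path B takes before its first down-step, i.e., the largest k ≥ 0 with {1,…,k} ⊆ B. -/
import Mathlib


/-- Height of the path with up-step set `A` after `x` steps: `2·|A ∩ {1,…,x}| − x`. -/
def ht (A : Finset ℕ) (x : ℕ) : ℤ := 2 * (A ∩ Finset.Icc 1 x).card - x

/-- `P` is the up-step set of a Dyck path of length `2n`. -/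
def IsDyck (n : ℕ) (P : Finset ℕ) : Prop :=
  P ⊆ Finset.Icc 1 (2 * n) ∧ P.card = n ∧ ∀ x ≤ 2 * n, 0 ≤ ht P x

/-- `A` is independent in the dual of the Catalan matroid: it is contained in the
complement of some basis. -/
def CatalanCoindep (n : ℕ) (A : Finset ℕ) : Prop :=
  ∃ B : Finset ℕ, IsDyck n B ∧ A ⊆ Finset.Icc 1 (2 * n) \ B

/-- A cocircuit (bond) of the Catalan matroid: a minimal subset of the ground set not
contained in the complement of any basis. -/
def IsCatalanCocircuit (n : ℕ) (A : Finset ℕ) : Prop :=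
  A ⊆ Finset.Icc 1 (2 * n) ∧ ¬ CatalanCoindep n A ∧ ∀ A' ⊂ A, CatalanCoindep n A'

/-- `i` is internally active with respect to the basis `B` (for the order
`1 < 2 < ⋯ < 2n`): `i ∈ B` and `i` is the smallest element of the unique cocircuit
contained in `({1,…,2n} \ B) ∪ {i}`. -/
def InternallyActive (n : ℕ) (B : Finset ℕ) (i : ℕ) : Prop :=
  i ∈ B ∧ ∃ D : Finset ℕ, IsCatalanCocircuit n D ∧
    D ⊆ insert i (Finset.Icc 1 (2 * n) \ B) ∧ i ∈ D ∧ ∀ d ∈ D, i ≤ d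

open Finset

lemma cnt_mono (A : Finset ℕ) {x y : ℕ} (h : x ≤ y) :
    (A ∩ Finset.Icc 1 x).card ≤ (A ∩ Finset.Icc 1 y).card :=
  Finset.card_le_card (Finset.inter_subset_inter_left (Finset.Icc_subset_Icc_right h))

lemma cnt_step (A : Finset ℕ) (y : ℕ) :
    (A ∩ Finset.Icc 1 (y+1)).card ≤ (A ∩ Finset.Icc 1 y).card + 1 := by
  have hsub : A ∩ Finset.Icc 1 (y+1) ⊆ insert (y+1) (A ∩ Finset.Icc 1 y) := by
    intro z hz
    simp only [Finset.mem_inter, Finset.mem_Icc] at hz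
    rcases Nat.lt_or_ge z (y+1) with h | h
    · exact Finset.mem_insert_of_mem (by simp only [Finset.mem_inter, Finset.mem_Icc]; exact ⟨hz.1, hz.2.1, by omega⟩)
    · have : z = y + 1 := by omega
      simp [this]
  calc (A ∩ Finset.Icc 1 (y+1)).card ≤ (insert (y+1) (A ∩ Finset.Icc 1 y)).card :=
        Finset.card_le_card hsub
    _ ≤ _ := Finset.card_insert_le _ _

lemma split_cnt {N y : ℕ} (A : Finset ℕ) (hy : y ≤ N) (hA : A ⊆ Finset.Icc 1 N) :
    (A ∩ Finset.Icc 1 y).card + ((Finset.Icc 1 N \ A) ∩ Finset.Icc 1 y).card = y := by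
  have hdisj : Disjoint (A ∩ Finset.Icc 1 y) ((Finset.Icc 1 N \ A) ∩ Finset.Icc 1 y) := by
    rw [Finset.disjoint_left]
    intro z hz hz'
    simp only [Finset.mem_inter, Finset.mem_sdiff] at hz hz'
    exact hz'.1.2 hz.1
  have hunion : (A ∩ Finset.Icc 1 y) ∪ ((Finset.Icc 1 N \ A) ∩ Finset.Icc 1 y)
      = Finset.Icc 1 y := by
    ext z
    simp only [Finset.mem_union, Finset.mem_inter, Finset.mem_sdiff, Finset.mem_Icc]
    constructor
    · rintro (⟨_, h⟩ | ⟨_, h⟩) <;> exact h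
    · intro hz
      by_cases hzA : z ∈ A
      · exact Or.inl ⟨hzA, hz⟩
      · exact Or.inr ⟨⟨⟨hz.1, hz.2.trans hy⟩, hzA⟩, hz⟩
  have := Finset.card_union_of_disjoint hdisj
  rw [hunion] at this
  simp [Nat.card_Icc] at this
  omega

lemma dyck_cnt {n : ℕ} {B : Finset ℕ} (hB : IsDyck n B) {x : ℕ} (hx : x ≤ 2*n) :
    x ≤ 2 * (B ∩ Finset.Icc 1 x).card := by
  have := hB.2.2 x hx
  unfold ht at this
  exact_mod_cast (by push_cast at this ⊢; omega : (x:ℤ) ≤ 2 * (B ∩ Finset.Icc 1 x).card)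

lemma ivt (f : ℕ → ℤ) (hstep : ∀ k, f (k+1) ≤ f k + 1) {a b : ℕ} (hab : a ≤ b)
    {t : ℤ} (ha : f a ≤ t) (hb : t ≤ f b) : ∃ y, a ≤ y ∧ y ≤ b ∧ f y = t := by
  classical
  have hP : ∃ y, a ≤ y ∧ t ≤ f y := ⟨b, hab, hb⟩
  obtain ⟨hay, hty⟩ := Nat.find_spec hP
  refine ⟨Nat.find hP, hay, Nat.find_min' hP ⟨hab, hb⟩, ?_⟩
  rcases Nat.eq_or_lt_of_le hay with heq | hlt
  · have h1 : f (Nat.find hP) ≤ t := by rw [← heq]; exact ha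
    omega
  · obtain ⟨z, hz⟩ : ∃ z, Nat.find hP = z + 1 := ⟨Nat.find hP - 1, by omega⟩
    have hmin := Nat.find_min hP (m := z) (by omega)
    push_neg at hmin
    have hfz : f z < t := hmin (by omega)
    have h2 := hstep z
    rw [hz] at hty ⊢
    omega

lemma exists_dyck_avoiding (n : ℕ) (A : Finset ℕ) (hA : A ⊆ Finset.Icc 1 (2*n))
    (hpre : ∀ x ≤ 2*n, 2 * (A ∩ Finset.Icc 1 x).card ≤ x) :
    CatalanCoindep n A := by
  classical
  set C : Finset ℕ := Finset.Icc 1 (2*n) \ A with hC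
  set h : ℕ → ℕ := fun y => (C ∩ Finset.Icc 1 y).card with hh
  have hsplit : ∀ y ≤ 2*n, (A ∩ Finset.Icc 1 y).card + h y = y := fun y hy =>
    split_cnt A hy hA
  have hlow : ∀ y ≤ 2*n, y ≤ 2 * h y := by
    intro y hy
    have h1 := hsplit y hy
    have h2 := hpre y hy
    omega
  have hmono : ∀ {y y' : ℕ}, y ≤ y' → h y ≤ h y' := fun hyy => cnt_mono C hyy
  have hstep : ∀ y, h (y+1) ≤ h y + 1 := fun y => cnt_step C y
  have h2n : n ≤ h (2*n) := by have := hlow (2*n) le_rfl; omega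
  set B : Finset ℕ := C.filter (fun y => (C ∩ Finset.Icc 1 y).card ≤ n) with hBdef
  have hBC : B ⊆ C := Finset.filter_subset _ _
  have hCIcc : C ⊆ Finset.Icc 1 (2*n) := Finset.sdiff_subset
  have hBIcc : B ⊆ Finset.Icc 1 (2*n) := hBC.trans hCIcc
  -- membership card fact: for y ∈ C, 1 ≤ h y
  have hpos : ∀ y ∈ C, 1 ≤ h y := by
    intro y hy
    have : y ∈ C ∩ Finset.Icc 1 y := by
      have := hCIcc hy
      simp only [Finset.mem_Icc] at this
      exact Finset.mem_inter.2 ⟨hy, Finset.mem_Icc.2 ⟨this.1, le_rfl⟩⟩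
    exact Finset.card_pos.2 ⟨y, this⟩
  -- strict monotone on C
  have hstrict : ∀ {y y' : ℕ}, y < y' → y' ∈ C → h y < h y' := by
    intro y y' hlt hy'
    have hss : C ∩ Finset.Icc 1 y ⊂ C ∩ Finset.Icc 1 y' := by
      refine Finset.ssubset_iff_of_subset
          (Finset.inter_subset_inter_left (Finset.Icc_subset_Icc_right (le_of_lt hlt))) |>.2 ?_
      refine ⟨y', ?_, ?_⟩
      · have := hCIcc hy'
        simp only [Finset.mem_Icc] at this
        exact Finset.mem_inter.2 ⟨hy', Finset.mem_Icc.2 ⟨this.1, le_rfl⟩⟩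
      · simp only [Finset.mem_inter, Finset.mem_Icc]
        rintro ⟨-, -, h2⟩; omega
    exact Finset.card_lt_card hss
  have hBcard : B.card = n := by
    rw [show n = (Finset.Icc 1 n).card by simp]
    apply Finset.card_bij (fun y _ => h y)
    · intro y hy
      simp only [hBdef, Finset.mem_filter] at hy
      exact Finset.mem_Icc.2 ⟨hpos y hy.1, hy.2⟩
    · intro y hy y' hy' heq
      simp only [hBdef, Finset.mem_filter] at hy hy'
      by_contra hne
      rcases Nat.lt_or_ge y y' with hlt | hge
      · exact absurd heq (Nat.ne_of_lt (hstrict hlt hy'.1))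
      · have : y' < y := by omega
        exact absurd heq.symm (Nat.ne_of_lt (hstrict this hy.1))
    · intro j hj
      simp only [Finset.mem_Icc] at hj
      have hex : ∃ y, j ≤ h y := ⟨2*n, le_trans hj.2 h2n⟩
      set y := Nat.find hex with hy
      have hjy : j ≤ h y := Nat.find_spec hex
      have hy0 : y ≠ 0 := by
        intro h0
        have : h 0 = 0 := by simp [hh]
        rw [h0, this] at hjy; omega
      obtain ⟨z, hz⟩ : ∃ z, y = z + 1 := ⟨y - 1, by omega⟩
      have hzlt : h z < j := by
        have := Nat.find_min hex (m := z) (by omega)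
        omega
      have hyj : h y = j := by
        have := hstep z
        rw [← hz] at this
        omega
      have hyC : y ∈ C := by
        by_contra hyC
        have : C ∩ Finset.Icc 1 y = C ∩ Finset.Icc 1 z := by
          ext w
          simp only [Finset.mem_inter, Finset.mem_Icc]
          constructor
          · rintro ⟨hw, h1, h2⟩
            refine ⟨hw, h1, ?_⟩
            rcases Nat.eq_or_lt_of_le h2 with he | hl
            · exact absurd (he ▸ hw) (hz ▸ hyC)
            · omega
          · rintro ⟨hw, h1, h2⟩; exact ⟨hw, h1, by omega⟩
        have : h y = h z := by simp only [hh]; rw [this]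
        omega
      refine ⟨y, ?_, hyj⟩
      simp only [hBdef, Finset.mem_filter]
      exact ⟨hyC, by rw [show (C ∩ Finset.Icc 1 y).card = h y from rfl, hyj]; exact hj.2⟩
  refine ⟨B, ⟨hBIcc, hBcard, ?_⟩, ?_⟩
  · intro x hx
    unfold ht
    have key : x ≤ 2 * (B ∩ Finset.Icc 1 x).card := by
      by_cases hc : h x ≤ n
      · have heq : B ∩ Finset.Icc 1 x = C ∩ Finset.Icc 1 x := by
          apply Finset.Subset.antisymm
          · exact Finset.inter_subset_inter_right hBC
          · intro z hz
            obtain ⟨hzC, hzI⟩ := Finset.mem_inter.1 hz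
            refine Finset.mem_inter.2 ⟨?_, hzI⟩
            simp only [hBdef, Finset.mem_filter]
            refine ⟨hzC, le_trans (hmono ?_) hc⟩
            exact (Finset.mem_Icc.1 hzI).2
        rw [heq]
        exact hlow x hx
      · have heq : B ∩ Finset.Icc 1 x = B := by
          apply Finset.Subset.antisymm (Finset.inter_subset_left)
          intro z hz
          refine Finset.mem_inter.2 ⟨hz, ?_⟩
          have hz' := hBIcc hz
          simp only [Finset.mem_Icc] at hz' ⊢
          refine ⟨hz'.1, ?_⟩
          by_contra hzx
          have : h x ≤ h z := hmono (by omega)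
          simp only [hBdef, Finset.mem_filter] at hz
          have : h z ≤ n := hz.2
          omega
        rw [heq, hBcard]
        omega
    push_cast
    omega
  · intro z hz
    refine Finset.mem_sdiff.2 ⟨hA hz, ?_⟩
    intro hzB
    have := hBC hzB
    rw [hC] at this
    exact (Finset.mem_sdiff.1 this).2 hz

lemma icc_subset_of_active {n : ℕ} {B : Finset ℕ} (hB : IsDyck n B) {i : ℕ}
    (h : InternallyActive n B i) : Finset.Icc 1 i ⊆ B := by
  classical
  obtain ⟨hiB, D, ⟨hDIcc, hDdep, -⟩, hDsub, hiD, hmin⟩ := h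
  intro j hj
  simp only [Finset.mem_Icc] at hj
  by_contra hjB
  have hji : j < i := by
    rcases Nat.eq_or_lt_of_le hj.2 with he | hl
    · exact absurd (he ▸ hiB) (he ▸ hjB)
    · exact hl
  -- D is not coindependent, so prefix condition fails
  have hviol : ∃ x ≤ 2*n, x < 2 * (D ∩ Finset.Icc 1 x).card := by
    by_contra hcon
    push_neg at hcon
    exact hDdep (exists_dyck_avoiding n D hDIcc (fun x hx => by have := hcon x hx; omega))
  obtain ⟨x, hx2n, hxv⟩ := hviol
  have hi2n : i ≤ 2*n := by
    have := hB.1 hiB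
    exact (Finset.mem_Icc.1 this).2
  -- i ≤ all elements of D ∩ Icc 1 x, and that set is nonempty
  have hne : (D ∩ Finset.Icc 1 x).Nonempty := Finset.card_pos.1 (by omega)
  have hix : i ≤ x := by
    obtain ⟨d, hd⟩ := hne
    obtain ⟨hdD, hdI⟩ := Finset.mem_inter.1 hd
    exact le_trans (hmin d hdD) (Finset.mem_Icc.1 hdI).2
  -- T = insert j ((D ∩ Icc 1 x).erase i) ⊆ (Icc 1 2n \ B) ∩ Icc 1 x
  set C := Finset.Icc 1 (2*n) \ B with hC
  have hjC : j ∈ C := Finset.mem_sdiff.2 ⟨Finset.mem_Icc.2 ⟨hj.1, by omega⟩, hjB⟩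
  have hTsub : insert j ((D ∩ Finset.Icc 1 x).erase i) ⊆ C ∩ Finset.Icc 1 x := by
    intro z hz
    rcases Finset.mem_insert.1 hz with rfl | hz'
    · exact Finset.mem_inter.2 ⟨hjC, Finset.mem_Icc.2 ⟨hj.1, by omega⟩⟩
    · obtain ⟨hzne, hzmem⟩ := Finset.mem_erase.1 hz'
      obtain ⟨hzD, hzI⟩ := Finset.mem_inter.1 hzmem
      refine Finset.mem_inter.2 ⟨?_, hzI⟩
      rcases Finset.mem_insert.1 (hDsub hzD) with rfl | hzC
      · exact absurd rfl hzne
      · exact hzC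
  have hjnot : j ∉ (D ∩ Finset.Icc 1 x).erase i := by
    intro hmem
    have := hmin j (Finset.mem_inter.1 (Finset.mem_erase.1 hmem).2).1
    omega
  have hTcard : (D ∩ Finset.Icc 1 x).card ≤ (insert j ((D ∩ Finset.Icc 1 x).erase i)).card := by
    rw [Finset.card_insert_of_notMem hjnot]
    have := Finset.pred_card_le_card_erase (s := D ∩ Finset.Icc 1 x) (a := i)
    omega
  have hCx : 2 * (C ∩ Finset.Icc 1 x).card ≤ x := by
    have h1 := split_cnt B hx2n hB.1
    have h2 := dyck_cnt hB hx2n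
    rw [hC]
    omega
  have := Finset.card_le_card hTsub
  omega

lemma active_of_icc {n : ℕ} (hn : 0 < n) {B : Finset ℕ} (hB : IsDyck n B) {i : ℕ}
    (hi1 : 1 ≤ i) (hicc : Finset.Icc 1 i ⊆ B) : InternallyActive n B i := by
  classical
  have hiB : i ∈ B := hicc (Finset.mem_Icc.2 ⟨hi1, le_rfl⟩)
  have hi2n : i ≤ 2*n := (Finset.mem_Icc.1 (hB.1 hiB)).2
  set C := Finset.Icc 1 (2*n) \ B with hC
  have hCcard : C.card = n := by
    rw [hC, Finset.card_sdiff_of_subset hB.1, Nat.card_Icc, hB.2.1]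
    omega
  have hCdisj : ∀ z ∈ C, z ∉ B := fun z hz => (Finset.mem_sdiff.1 hz).2
  have hCIcc : C ⊆ Finset.Icc 1 (2*n) := Finset.sdiff_subset
  have hCi : ∀ z ∈ C, i < z := by
    intro z hz
    by_contra hzi
    push_neg at hzi
    have h1z : 1 ≤ z := (Finset.mem_Icc.1 (hCIcc hz)).1
    exact hCdisj z hz (hicc (Finset.mem_Icc.2 ⟨h1z, hzi⟩))
  -- F y = card of insert i (C ∩ Ioc i y); i ∉ C ∩ Ioc i y
  have hinot : ∀ y, i ∉ C ∩ Finset.Ioc i y := by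
    intro y hmem
    exact absurd (Finset.mem_Ioc.1 (Finset.mem_inter.1 hmem).2).1 (lt_irrefl i)
  set F : ℕ → ℕ := fun y => (insert i (C ∩ Finset.Ioc i y)).card with hF
  have hFcard : ∀ y, F y = (C ∩ Finset.Ioc i y).card + 1 := fun y =>
    Finset.card_insert_of_notMem (hinot y)
  have hFstep : ∀ y, F (y+1) ≤ F y + 1 := by
    intro y
    rw [hFcard, hFcard]
    have hsub : C ∩ Finset.Ioc i (y+1) ⊆ insert (y+1) (C ∩ Finset.Ioc i y) := by
      intro z hz
      obtain ⟨hzC, hzI⟩ := Finset.mem_inter.1 hz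
      obtain ⟨h1, h2⟩ := Finset.mem_Ioc.1 hzI
      rcases Nat.eq_or_lt_of_le h2 with he | hl
      · exact he ▸ Finset.mem_insert_self _ _
      · exact Finset.mem_insert_of_mem (Finset.mem_inter.2 ⟨hzC, Finset.mem_Ioc.2 ⟨h1, by omega⟩⟩)
    have := (Finset.card_le_card hsub).trans (Finset.card_insert_le _ _)
    omega
  have hFi : F i = 1 := by rw [hFcard]; simp
  have hF2n : F (2*n) = n + 1 := by
    rw [hFcard]
    have : C ∩ Finset.Ioc i (2*n) = C := by
      apply Finset.Subset.antisymm Finset.inter_subset_left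
      intro z hz
      refine Finset.mem_inter.2 ⟨hz, Finset.mem_Ioc.2 ⟨hCi z hz, (Finset.mem_Icc.1 (hCIcc hz)).2⟩⟩
    rw [this, hCcard]
  -- IVT: find m ∈ [i, 2n] with 2 * F m = m + 1
  have hivt := ivt (fun y => 2 * (F y : ℤ) - y)
      (fun k => by show 2 * (F (k+1) : ℤ) - (k+1) ≤ 2 * (F k : ℤ) - k + 1
                   have := hFstep k; push_cast; omega)
      hi2n (t := 1)
      (by show 2 * (F i : ℤ) - i ≤ 1; rw [hFi]; push_cast; omega)
      (by show (1:ℤ) ≤ 2 * (F (2*n) : ℤ) - (2*n); rw [hF2n]; push_cast; omega)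
  obtain ⟨m0, him0, hm02n, hfm0⟩ := hivt
  have hfm0' : 2 * (F m0 : ℤ) - m0 = 1 := hfm0
  have hm0' : i ≤ m0 ∧ 2 * F m0 = m0 + 1 := ⟨him0, by omega⟩
  have hex : ∃ m, i ≤ m ∧ 2 * F m = m + 1 := ⟨m0, hm0'⟩
  set m := Nat.find hex with hm
  obtain ⟨him, hFm⟩ := Nat.find_spec hex
  have hm2n : m ≤ 2*n := le_trans (Nat.find_min' hex hm0') hm02n
  -- prefix property: for i ≤ y < m, 2 * F y ≤ y
  have hprefix : ∀ y, i ≤ y → y < m → 2 * F y ≤ y := by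
    intro y
    induction y with
    | zero => intro h1 _; omega
    | succ z ih =>
      intro h1 h2
      have hne : ¬ (i ≤ z + 1 ∧ 2 * F (z+1) = z + 2) := by
        have := Nat.find_min hex (m := z+1) (by omega)
        intro ⟨a, b⟩; exact this ⟨a, by omega⟩
      rcases Nat.eq_or_lt_of_le h1 with he | hl
      · -- z + 1 = i : F i = 1, need 2 ≤ i, i.e. i ≠ 1
        rw [← he, hFi]
        have : 2 * F (z+1) ≠ z + 2 := fun hb => hne ⟨h1, hb⟩
        rw [← he] at this
        rw [hFi] at this
        omega
      · have hzy : 2 * F z ≤ z := ih (by omega) (by omega)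
        have := hFstep z
        have : 2 * F (z+1) ≠ z + 2 := fun hb => hne ⟨h1, hb⟩
        have := hFstep z
        omega
  set D := insert i (C ∩ Finset.Ioc i m) with hD
  have hDcard : 2 * D.card = m + 1 := hFm
  have hDm : ∀ d ∈ D, 1 ≤ d ∧ d ≤ m ∧ i ≤ d := by
    intro d hd
    rcases Finset.mem_insert.1 hd with rfl | hd'
    · exact ⟨hi1, him, le_rfl⟩
    · obtain ⟨hdC, hdI⟩ := Finset.mem_inter.1 hd'
      obtain ⟨h1, h2⟩ := Finset.mem_Ioc.1 hdI
      exact ⟨by omega, h2, le_of_lt h1⟩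
  have hDIcc : D ⊆ Finset.Icc 1 (2*n) := by
    intro d hd
    obtain ⟨h1, h2, -⟩ := hDm d hd
    exact Finset.mem_Icc.2 ⟨h1, le_trans h2 hm2n⟩
  -- D ∩ Icc 1 x computations
  have hDcnt_lt : ∀ x, x < i → D ∩ Finset.Icc 1 x = ∅ := by
    intro x hx
    rw [Finset.eq_empty_iff_forall_notMem]
    intro z hz
    obtain ⟨hzD, hzI⟩ := Finset.mem_inter.1 hz
    have := (hDm z hzD).2.2
    have := (Finset.mem_Icc.1 hzI).2
    omega
  have hDcnt_mid : ∀ x, i ≤ x → x ≤ m → D ∩ Finset.Icc 1 x = insert i (C ∩ Finset.Ioc i x) := by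
    intro x hix hxm
    ext z
    simp only [Finset.mem_inter, Finset.mem_insert, Finset.mem_Icc, Finset.mem_Ioc, hD]
    constructor
    · rintro ⟨(rfl | ⟨hzC, h1, h2⟩), h3, h4⟩
      · exact Or.inl rfl
      · exact Or.inr ⟨hzC, h1, h4⟩
    · rintro (rfl | ⟨hzC, h1, h2⟩)
      · exact ⟨Or.inl rfl, hi1, hix⟩
      · exact ⟨Or.inr ⟨hzC, h1, by omega⟩, by omega, h2⟩
  have hDcnt_ge : ∀ x, m ≤ x → D ∩ Finset.Icc 1 x = D := by
    intro x hmx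
    apply Finset.Subset.antisymm Finset.inter_subset_left
    intro z hz
    obtain ⟨h1, h2, -⟩ := hDm z hz
    exact Finset.mem_inter.2 ⟨hz, Finset.mem_Icc.2 ⟨h1, by omega⟩⟩
  refine ⟨hiB, D, ⟨hDIcc, ?_, ?_⟩, ?_, Finset.mem_insert_self _ _, fun d hd => (hDm d hd).2.2⟩
  · -- not coindependent
    rintro ⟨B', hB', hsub⟩
    have hDm' : D ⊆ Finset.Icc 1 m := fun d hd =>
      Finset.mem_Icc.2 ⟨(hDm d hd).1, (hDm d hd).2.1⟩
    have hBm' : B' ∩ Finset.Icc 1 m ⊆ Finset.Icc 1 m := Finset.inter_subset_right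
    have hdisj : Disjoint D (B' ∩ Finset.Icc 1 m) := by
      rw [Finset.disjoint_left]
      intro z hz hz'
      exact (Finset.mem_sdiff.1 (hsub hz)).2 (Finset.mem_inter.1 hz').1
    have hcard : D.card + (B' ∩ Finset.Icc 1 m).card ≤ m := by
      have := Finset.card_le_card (Finset.union_subset hDm' hBm')
      rw [Finset.card_union_of_disjoint hdisj] at this
      simpa [Nat.card_Icc] using this
    have := dyck_cnt hB' hm2n
    omega
  · -- minimality
    intro A' hA'
    obtain ⟨e, heD, heA'⟩ := Finset.exists_of_ssubset hA'
    apply exists_dyck_avoiding n A' (fun z hz => hDIcc (hA'.1 hz))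
    intro x hx
    rcases Nat.lt_or_ge x i with hxi | hxi
    · have hsub : A' ∩ Finset.Icc 1 x ⊆ D ∩ Finset.Icc 1 x :=
        Finset.inter_subset_inter_right hA'.1
      rw [hDcnt_lt x hxi] at hsub
      have h0 : (A' ∩ Finset.Icc 1 x).card ≤ (∅ : Finset ℕ).card := Finset.card_le_card hsub
      simp only [Finset.card_empty] at h0
      omega
    rcases Nat.lt_or_ge x m with hxm | hxm
    · have h1 : A' ∩ Finset.Icc 1 x ⊆ D ∩ Finset.Icc 1 x :=
        Finset.inter_subset_inter_right hA'.1
      have h2 := Finset.card_le_card h1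
      rw [hDcnt_mid x hxi (le_of_lt hxm)] at h2
      have h3 := hprefix x hxi hxm
      have h2' : (A' ∩ Finset.Icc 1 x).card ≤ F x := h2
      omega
    · have h1 : A' ∩ Finset.Icc 1 x ⊆ D.erase e := by
        intro z hz
        have hzA' := (Finset.mem_inter.1 hz).1
        refine Finset.mem_erase.2 ⟨?_, hA'.1 hzA'⟩
        rintro rfl
        exact heA' hzA'
      have h2 := Finset.card_le_card h1
      rw [Finset.card_erase_of_mem heD] at h2
      omega
  · -- D ⊆ insert i (Icc 1 2n \ B)
    intro z hz
    rcases Finset.mem_insert.1 hz with rfl | hz'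
    · exact Finset.mem_insert_self _ _
    · exact Finset.mem_insert_of_mem (Finset.mem_inter.1 hz').1

/-- For any basis `B` of the Catalan matroid, the internal activity of `B` equals the
number of up-steps that the Dyck path `B` takes before its first down-step, i.e. the
largest `k ≥ 0` with `{1,…,k} ⊆ B`. -/
theorem catalan_internal_activity (n : ℕ) (hn : 0 < n) (B : Finset ℕ) (hB : IsDyck n B) :
    {i : ℕ | InternallyActive n B i}.ncard =
      sSup {k : ℕ | Finset.Icc 1 k ⊆ B} := by
  classical
  set S : Set ℕ := {k : ℕ | Finset.Icc 1 k ⊆ B} with hS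
  have hbdd : BddAbove S := by
    refine ⟨n, fun k hk => ?_⟩
    have := Finset.card_le_card hk
    rw [Nat.card_Icc, hB.2.1] at this
    omega
  have h0S : (0 : ℕ) ∈ S := by simp [hS]
  set a := sSup S with ha
  have haS : a ∈ S := Nat.sSup_mem ⟨0, h0S⟩ hbdd
  have h1B : (1 : ℕ) ∈ B := by
    have h12n : 1 ≤ 2*n := by omega
    have hd := dyck_cnt hB h12n
    have hpos : 0 < (B ∩ Finset.Icc 1 1).card := by omega
    obtain ⟨z, hz⟩ := Finset.card_pos.1 hpos
    obtain ⟨hzB, hzI⟩ := Finset.mem_inter.1 hz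
    have : z = 1 := by
      have := Finset.mem_Icc.1 hzI; omega
    exact this ▸ hzB
  have h1a : 1 ≤ a := le_csSup hbdd (by
    show Finset.Icc 1 1 ⊆ B
    intro z hz
    have : z = 1 := by have := Finset.mem_Icc.1 hz; omega
    exact this ▸ h1B)
  have hseteq : {i : ℕ | InternallyActive n B i} = ↑(Finset.Icc 1 a) := by
    ext i
    simp only [Set.mem_setOf_eq, Finset.coe_Icc, Set.mem_Icc]
    constructor
    · intro hact
      have hiB := hact.1
      have h1i : 1 ≤ i := (Finset.mem_Icc.1 (hB.1 hiB)).1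
      have hicc := icc_subset_of_active hB hact
      exact ⟨h1i, le_csSup hbdd hicc⟩
    · rintro ⟨h1i, hia⟩
      exact active_of_icc hn hB h1i
        (fun z hz => haS (Finset.mem_Icc.2 ⟨(Finset.mem_Icc.1 hz).1,
          le_trans (Finset.mem_Icc.1 hz).2 hia⟩))
  rw [hseteq, Set.ncard_coe_finset, Nat.card_Icc]
  omega
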